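/- arXiv:1504.02075 — 2 statements merged into one kernel-verified Lean document; each statement's English description precedes it below -/
import Mathlib

section
/- Let m, n be coprime positive integers and D an (m,n)-Dyck path with rank complement D̄. Then the south-end ranks satisfy S(D̄) = max(S(D)) - S(D), i.e., s is a south-end rank of D if and only if max(S(D)) - s is a south-end rank of D̄. -/
open Nat

/-- Number of north steps among the first `i` steps of the path `P`
(`true` = north step `N`, `false` = east step `E`). -/
def nSteps (P : List Bool) (i : ℕ) : ℕ := (P.take i).count true

/-- Number of east steps among the first `i` steps. -/
def eSteps (P : List Bool) (i : ℕ) : ℕ := (P.take i).count false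

/-- Rank `m*b - n*a` of the `i`-th lattice point `(a,b)` of the path. -/
def rank (m n : ℕ) (P : List Bool) (i : ℕ) : ℤ :=
  (m : ℤ) * nSteps P i - (n : ℤ) * eSteps P i

/-- A lattice path from `(0,0)` to `(m,n)`: `m+n` unit steps, `n` of them north. -/
def IsPath (m n : ℕ) (P : List Bool) : Prop :=
  P.length = m + n ∧ P.count true = n

/-- An `(m,n)`-Dyck path: a path staying weakly above the diagonal,
equivalently with all ranks nonnegative. -/
def IsDyck (m n : ℕ) (P : List Bool) : Prop :=
  IsPath m n P ∧ ∀ i ≤ m + n, 0 ≤ rank m n P i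

/-- The set of ranks of the first `m+n` lattice points of the path. -/
def rankSet (m n : ℕ) (P : List Bool) : Finset ℤ :=
  (Finset.range (m + n)).image (rank m n P)

/-- Ranks of south ends (starting points of north steps). -/
def southRanks (m n : ℕ) (P : List Bool) : Finset ℤ :=
  ((Finset.range (m + n)).filter (fun i => P.getD i false = true)).image (rank m n P)

/-- Ranks of west ends (starting points of east steps). -/
def westRanks (m n : ℕ) (P : List Bool) : Finset ℤ :=
  ((Finset.range (m + n)).filter (fun i => P.getD i true = false)).image (rank m n P)

/-- Transpose of a path: reverse the word and exchange `N` and `E`. -/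
def transpose (P : List Bool) : List Bool := (P.map (fun b => !b)).reverse

/-- `D'` is the rank complement of `D`: its rank set is `M - r(D)`
where `M` is the maximum rank of `D`. -/
def IsRankComplement (m n : ℕ) (D D' : List Bool) : Prop :=
  ∃ M : ℤ, IsGreatest (↑(rankSet m n D) : Set ℤ) M ∧
    rankSet m n D' = (rankSet m n D).image (fun r => M - r)

/-- A partition, encoded as a weakly decreasing list of positive integers. -/
def IsPartition (L : List ℕ) : Prop :=
  L.Pairwise (· ≥ ·) ∧ ∀ x ∈ L, 0 < x

/-- Hook length of the cell in (0-based) row `i`, column `j`. -/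
def hook (L : List ℕ) (i j : ℕ) : ℕ :=
  L.getD i 0 - j + (L.drop (i + 1)).countP (fun x => decide (j < x))

/-- `L` is an `n`-core: no hook length is divisible by `n`. -/
def IsCore (n : ℕ) (L : List ℕ) : Prop :=
  ∀ i < L.length, ∀ j < L.getD i 0, ¬ (n ∣ hook L i j)

/-- The set of first-column hook lengths of `L`. -/
def firstColHooks (L : List ℕ) : Finset ℕ :=
  (Finset.range L.length).image (fun i => hook L i 0)

/-- Conjugate (transpose) partition. -/
def conjugate (L : List ℕ) : List ℕ :=
  (List.range (L.getD 0 0)).map (fun j => L.countP (fun x => decide (j < x)))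

/-- `H` is `n`-flush: no element is a multiple of `n`, and it is closed
under subtracting `n` while staying positive. -/
def IsFlush (n : ℕ) (H : Finset ℕ) : Prop :=
  (∀ h ∈ H, ¬ (n ∣ h)) ∧ ∀ h ∈ H, n < h → h - n ∈ H

/-- `s_i^n(H)`: the maximum of `((n+H) ∪ {i}) ∩ (i + nℤ)`. -/
def sFun (n : ℕ) (H : Finset ℕ) (i : ℕ) : ℕ :=
  (insert i ((H.filter (fun h => h % n = i % n)).image (fun h => h + n))).max'
    (Finset.insert_nonempty _ _)

/-- `S^n(H) = {s_0, ..., s_{n-1}}`. -/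
def sSet (n : ℕ) (H : Finset ℕ) : Finset ℕ := (Finset.range n).image (sFun n H)

/-- The lattice point `(a,b)` lies strictly to the right of the path `D`
inside the `m × n` rectangle: every lattice point of `D` at height `b`
has `x`-coordinate less than `a`. -/
def StrictlyRightOf (m n : ℕ) (D : List Bool) (a b : ℕ) : Prop :=
  a ≤ m ∧ b ≤ n ∧ ∀ i ≤ m + n, (D.take i).count true = b → (D.take i).count false < a

/-- The positive ranks of lattice points lying strictly to the right of `D`. -/
def andersonSet (m n : ℕ) (D : List Bool) : Set ℕ :=
  {h | 0 < h ∧ ∃ a b : ℕ, StrictlyRightOf m n D a b ∧ (h : ℤ) = (m : ℤ) * b - (n : ℤ) * a}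

/-- The `x`-coordinate of the vertical step of `D` at height `y`
(the number of east steps taken at heights `≤ y`). -/
def southX (D : List Bool) (y : ℕ) : ℕ :=
  (List.range D.length).countP
    (fun i => decide (D.getD i true = false ∧ (D.take i).count true ≤ y))

/-- The partition formed by the cells above the path `D`
inside a rectangle of height `n`. -/
def pathPartition (n : ℕ) (D : List Bool) : List ℕ :=
  (((List.range n).reverse).map (fun y => southX D y)).filter (fun x => decide (0 < x))

/-- Arm of the cell `(i,j)` of `L`. -/
def armL (L : List ℕ) (i j : ℕ) : ℕ := L.getD i 0 - (j + 1)

/-- Leg of the cell `(i,j)` of `L`. -/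
def legL (L : List ℕ) (i j : ℕ) : ℕ := (L.drop (i + 1)).countP (fun x => decide (j < x))

/-- The dinv statistic of an `(m,n)`-Dyck path: the number of cells `c` of the
partition above the path with `arm(c)/(leg(c)+1) ≤ m/n < (arm(c)+1)/leg(c)`. -/
def dinv (m n : ℕ) (D : List Bool) : ℕ :=
  ((Finset.range (pathPartition n D).length ×ˢ Finset.range m).filter
    (fun p => p.2 < (pathPartition n D).getD p.1 0 ∧
      armL (pathPartition n D) p.1 p.2 * n ≤ m * (legL (pathPartition n D) p.1 p.2 + 1) ∧
      m * legL (pathPartition n D) p.1 p.2 < n * (armL (pathPartition n D) p.1 p.2 + 1))).card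

/-- `codinv(D) = #{(r_s, r_w) : r_s ∈ S(D), r_w ∈ W(D), r_s < r_w}`. -/
def codinv (m n : ℕ) (D : List Bool) : ℕ :=
  ((southRanks m n D ×ˢ westRanks m n D).filter (fun p => p.1 < p.2)).card

/-- The skew length of an `(m,n)`-core: the number of cells lying both in an
`n`-row (a row `i` with `h_i + n ∈ S^n(H_λ)`) and in the `m`-boundary
(hook length `< m`). -/
def skewLength (m n : ℕ) (L : List ℕ) : ℕ :=
  ((Finset.range L.length ×ˢ Finset.range (L.headD 0)).filter
    (fun p => p.2 < L.getD p.1 0 ∧ hook L p.1 p.2 < m ∧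
      hook L p.1 0 + n ∈ sSet n (firstColHooks L))).card
section RankHelpers

lemma count_true_add_count_false (l : List Bool) :
    l.count true + l.count false = l.length := by
  induction l with
  | nil => simp
  | cons b t ih => cases b <;> simp [List.count_cons] <;> omega

lemma take_succ_getD (l : List Bool) (i : ℕ) (h : i < l.length) :
    l.take (i + 1) = l.take i ++ [l.getD i false] := by
  rw [List.take_succ, List.getElem?_eq_getElem h, List.getD_eq_getElem l false h]
  rfl

lemma nSteps_succ (P : List Bool) (i : ℕ) (h : i < P.length) :
    nSteps P (i + 1) = nSteps P i + (if P.getD i false = true then 1 else 0) := by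
  have e := take_succ_getD P i h
  cases hb : P.getD i false <;> rw [hb] at e <;>
    simp [nSteps, e, List.count_append]

lemma eSteps_succ (P : List Bool) (i : ℕ) (h : i < P.length) :
    eSteps P (i + 1) = eSteps P i + (if P.getD i false = true then 0 else 1) := by
  have e := take_succ_getD P i h
  cases hb : P.getD i false <;> rw [hb] at e <;>
    simp [eSteps, e, List.count_append]

lemma nSteps_add_eSteps (m n : ℕ) (P : List Bool) (hP : IsPath m n P)
    {i : ℕ} (hi : i ≤ m + n) : nSteps P i + eSteps P i = i := by
  have := count_true_add_count_false (P.take i)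
  rwa [List.length_take, hP.1, Nat.min_eq_left hi] at this

lemma nSteps_full (m n : ℕ) (P : List Bool) (hP : IsPath m n P) :
    nSteps P (m + n) = n := by
  have : P.take (m + n) = P := List.take_of_length_le (le_of_eq hP.1)
  rw [nSteps, this, hP.2]

lemma rank_full (m n : ℕ) (P : List Bool) (hP : IsPath m n P) :
    rank m n P (m + n) = 0 := by
  have h1 := nSteps_full m n P hP
  have h2 := nSteps_add_eSteps m n P hP (le_refl (m + n))
  rw [rank, h1]
  have : eSteps P (m + n) = m := by omega
  rw [this]; ring

lemma rank_zero (m n : ℕ) (P : List Bool) : rank m n P 0 = 0 := by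
  simp [rank, nSteps, eSteps]

/-- Key arithmetic lemma: if two ranks differ by `m * c`, the positions differ
by `c` modulo `m + n`. -/
lemma rank_diff (m n : ℕ) (hn : 0 < n) (hco : Nat.Coprime m n)
    (P : List Bool) (hP : IsPath m n P) {i j : ℕ} (hi : i ≤ m + n) (hj : j ≤ m + n)
    (c : ℤ) (h : rank m n P j = rank m n P i + m * c) :
    ∃ t : ℤ, (j : ℤ) - i = c + (m + n) * t ∧
      (nSteps P j : ℤ) = nSteps P i + c + n * t := by
  have hsi : (nSteps P i : ℤ) + eSteps P i = i := by
    exact_mod_cast congrArg (Nat.cast : ℕ → ℤ) (nSteps_add_eSteps m n P hP hi)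
  have hsj : (nSteps P j : ℤ) + eSteps P j = j := by
    exact_mod_cast congrArg (Nat.cast : ℕ → ℤ) (nSteps_add_eSteps m n P hP hj)
  have hrank : (m : ℤ) * nSteps P j - n * eSteps P j
      = (m : ℤ) * nSteps P i - n * eSteps P i + m * c := h
  have hcop : IsCoprime (n : ℤ) (m : ℤ) := by
    rw [Int.isCoprime_iff_gcd_eq_one, Int.gcd_natCast_natCast]
    exact hco.symm
  have hdvd : (n : ℤ) ∣ ((nSteps P j : ℤ) - nSteps P i - c) := by
    apply hcop.dvd_of_dvd_mul_left
    exact ⟨(eSteps P j : ℤ) - eSteps P i, by linarith [hrank]⟩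
  obtain ⟨t, ht⟩ := hdvd
  refine ⟨t, ?_, by linarith [ht]⟩
  have hE : (eSteps P j : ℤ) - eSteps P i = m * t := by
    have hne : (n : ℤ) ≠ 0 := by exact_mod_cast hn.ne'
    have : (n : ℤ) * ((eSteps P j : ℤ) - eSteps P i) = n * ((m : ℤ) * t) := by
      nlinarith [hrank, ht]
    exact mul_left_cancel₀ hne this
  have : (j : ℤ) - i = ((nSteps P j : ℤ) - nSteps P i) + ((eSteps P j : ℤ) - eSteps P i) := by
    linarith
  rw [this, hE]; linarith [ht]

lemma small_t {m n : ℕ} (hm : 0 < m) (hn : 0 < n) {x t : ℤ}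
    (hx : x = (m + n) * t) (h1 : -(m + n : ℤ) < x) (h2 : x < (m + n : ℤ)) : t = 0 := by
  have hmn : (0 : ℤ) < (m : ℤ) + n := by positivity
  rcases lt_trichotomy t 0 with h | h | h
  · exfalso; nlinarith
  · exact h
  · exfalso; nlinarith

lemma rank_inj (m n : ℕ) (hm : 0 < m) (hn : 0 < n) (hco : Nat.Coprime m n)
    (P : List Bool) (hP : IsPath m n P) {i j : ℕ} (hi : i < m + n) (hj : j < m + n)
    (h : rank m n P i = rank m n P j) : i = j := by
  obtain ⟨t, ht, -⟩ := rank_diff m n hn hco P hP (le_of_lt hj) (le_of_lt hi) 0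
    (by rw [h]; ring)
  have h0 : t = 0 := by
    apply small_t hm hn (x := (i : ℤ) - j) (by linarith [ht])
    · push_cast; omega
    · push_cast; omega
  rw [h0] at ht
  omega

lemma mem_rankSet_iff (m n : ℕ) (P : List Bool) (r : ℤ) :
    r ∈ rankSet m n P ↔ ∃ i, i < m + n ∧ rank m n P i = r := by
  simp [rankSet, Finset.mem_image, Finset.mem_range]

lemma mem_southRanks_iff (m n : ℕ) (hm : 0 < m) (hn : 0 < n) (hco : Nat.Coprime m n)
    (D : List Bool) (hD : IsDyck m n D) (r : ℤ) :
    r ∈ southRanks m n D ↔ r ∈ rankSet m n D ∧ r + m ∈ rankSet m n D := by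
  obtain ⟨hP, hpos⟩ := hD
  constructor
  · intro hr
    simp only [southRanks, Finset.mem_image, Finset.mem_filter, Finset.mem_range] at hr
    obtain ⟨i, ⟨hi, hstep⟩, hri⟩ := hr
    have hilen : i < D.length := by rw [hP.1]; exact hi
    have hsucc : rank m n D (i + 1) = r + m := by
      rw [rank, nSteps_succ D i hilen, eSteps_succ D i hilen, hstep]
      simp only [if_true]
      rw [← hri, rank]
      push_cast; ring
    have hi1 : i + 1 < m + n := by
      rcases Nat.lt_or_ge (i + 1) (m + n) with h | h
      · exact h
      · exfalso
        have : i + 1 = m + n := by omega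
        rw [this, rank_full m n D hP] at hsucc
        have := hpos i (le_of_lt hi)
        rw [hri] at this
        have : (0 : ℤ) < m := by exact_mod_cast hm
        omega
    constructor
    · exact (mem_rankSet_iff m n D r).mpr ⟨i, hi, hri⟩
    · exact (mem_rankSet_iff m n D (r + m)).mpr ⟨i + 1, hi1, hsucc⟩
  · rintro ⟨hr, hrm⟩
    obtain ⟨i, hi, hri⟩ := (mem_rankSet_iff m n D r).mp hr
    obtain ⟨j, hj, hrj⟩ := (mem_rankSet_iff m n D (r + m)).mp hrm
    obtain ⟨t, ht, hb⟩ := rank_diff m n hn hco D hP (le_of_lt hi) (le_of_lt hj) 1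
      (by rw [hri, hrj]; ring)
    have hmn : (0 : ℤ) < (m : ℤ) + n := by positivity
    have htcases : t = 0 ∨ t = -1 := by
      rcases lt_trichotomy t 0 with h | h | h
      · right
        by_contra hne
        have : t ≤ -2 := by omega
        have h1 : (-(m + n : ℤ)) < (j : ℤ) - i := by push_cast; omega
        nlinarith
      · left; exact h
      · exfalso
        have : 1 ≤ t := h
        have h2 : (j : ℤ) - i < (m + n : ℤ) := by push_cast; omega
        nlinarith
    rcases htcases with h0 | hneg
    · -- j = i + 1, step i is north
      rw [h0] at ht hb
      have hji : j = i + 1 := by omega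
      have hilen : i < D.length := by rw [hP.1]; exact hi
      have hstep : D.getD i false = true := by
        by_contra hne
        have hfalse : D.getD i false = false := by
          cases hgd : D.getD i false
          · rfl
          · exact absurd hgd hne
        have := nSteps_succ D i hilen
        rw [hfalse] at this
        simp only [if_neg (by simp : ¬(false = true))] at this
        rw [hji] at hb
        rw [this] at hb
        push_cast at hb
        omega
      simp only [southRanks, Finset.mem_image, Finset.mem_filter, Finset.mem_range]
      exact ⟨i, ⟨hi, hstep⟩, hri⟩
    · exfalso
      rw [hneg] at ht
      have hj0 : j = 0 := by push_cast at ht; omega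
      rw [hj0, rank_zero] at hrj
      have := hpos i (le_of_lt hi)
      rw [hri] at this
      have hm' : (0 : ℤ) < m := by exact_mod_cast hm
      omega

lemma max_south (m n : ℕ) (hm : 0 < m) (hn : 0 < n) (hco : Nat.Coprime m n)
    (D : List Bool) (hD : IsDyck m n D) (M Ms : ℤ)
    (hM : IsGreatest (↑(rankSet m n D) : Set ℤ) M)
    (hMs : IsGreatest (↑(southRanks m n D) : Set ℤ) Ms) : Ms = M - m := by
  obtain ⟨hP, hpos⟩ := hD
  have hmn2 : 2 ≤ m + n := by omega
  -- M is attained at some i, and i ≠ 0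
  obtain ⟨i, hi, hri⟩ := (mem_rankSet_iff m n D M).mp hM.1
  have hi0 : i ≠ 0 := by
    intro h0
    rw [h0, rank_zero] at hri
    -- then rank 1 = 0 = rank 0, contradiction with injectivity
    have h1mem : rank m n D 1 ∈ (↑(rankSet m n D) : Set ℤ) := by
      exact_mod_cast (mem_rankSet_iff m n D _).mpr ⟨1, by omega, rfl⟩
    have hle := hM.2 h1mem
    have hge := hpos 1 (by omega)
    have heq : rank m n D 1 = rank m n D 0 := by rw [rank_zero]; omega
    have := rank_inj m n hm hn hco D hP (by omega : 1 < m + n) (by omega : 0 < m + n) heq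
    omega
  obtain ⟨k, rfl⟩ : ∃ k, i = k + 1 := ⟨i - 1, by omega⟩
  have hklen : k < D.length := by rw [hP.1]; omega
  have hkmem : rank m n D k ∈ (↑(rankSet m n D) : Set ℤ) := by
    exact_mod_cast (mem_rankSet_iff m n D _).mpr ⟨k, by omega, rfl⟩
  have hstep : D.getD k false = true := by
    by_contra hne
    have hfalse : D.getD k false = false := by
      cases hgd : D.getD k false
      · rfl
      · exact absurd hgd hne
    have h1 := nSteps_succ D k hklen
    have h2 := eSteps_succ D k hklen
    rw [hfalse] at h1 h2
    simp only [if_neg (by simp : ¬(false = true))] at h1 h2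
    have : rank m n D (k + 1) = rank m n D k - n := by
      rw [rank, rank, h1, h2]; push_cast; ring
    rw [hri] at this
    have hle := hM.2 hkmem
    have : (0:ℤ) < n := by exact_mod_cast hn
    omega
  -- so M - m = rank k ∈ southRanks
  have hrk : rank m n D k = M - m := by
    have h1 := nSteps_succ D k hklen
    have h2 := eSteps_succ D k hklen
    rw [hstep] at h1 h2
    simp only [if_pos rfl] at h1 h2
    have : rank m n D (k + 1) = rank m n D k + m := by
      rw [rank, rank, h1, h2]; push_cast; ring
    rw [hri] at this; omega
  have hMm : M - m ∈ (↑(southRanks m n D) : Set ℤ) := by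
    have : M - m ∈ southRanks m n D := by
      simp only [southRanks, Finset.mem_image, Finset.mem_filter, Finset.mem_range]
      exact ⟨k, ⟨by omega, hstep⟩, hrk⟩
    exact_mod_cast this
  have hge := hMs.2 hMm
  -- Ms + m ∈ rankSet, so Ms + m ≤ M
  have hMsmem := (mem_southRanks_iff m n hm hn hco D ⟨hP, hpos⟩ Ms).mp
    (by exact_mod_cast hMs.1)
  have hle : Ms + m ≤ M := hM.2 (by exact_mod_cast hMsmem.2)
  omega

end RankHelpers

/-- For an `(m,n)`-Dyck path `D` with rank complement `D'`,
the south-end ranks satisfy `S(D') = max(S(D)) - S(D)`. -/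
theorem southRanks_complement (m n : ℕ) (hm : 0 < m) (hn : 0 < n)
    (hco : Nat.Coprime m n) (D D' : List Bool)
    (hD : IsDyck m n D) (hD' : IsDyck m n D')
    (hcomp : IsRankComplement m n D D') (Ms : ℤ)
    (hMs : IsGreatest (↑(southRanks m n D) : Set ℤ) Ms) :
    southRanks m n D' = (southRanks m n D).image (fun s => Ms - s) := by
  obtain ⟨M, hM, hset⟩ := hcomp
  have hMsM : Ms = M - m := max_south m n hm hn hco D hD M Ms hM hMs
  ext r
  rw [mem_southRanks_iff m n hm hn hco D' hD' r]
  simp only [Finset.mem_image, hset]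
  constructor
  · rintro ⟨⟨t, htmem, hrt⟩, ⟨u, humem, hru⟩⟩
    have hu : u = t - m := by omega
    refine ⟨t - m, ?_, by omega⟩
    rw [mem_southRanks_iff m n hm hn hco D hD]
    constructor
    · rw [← hu]; exact humem
    · have : t - m + m = t := by ring
      rw [this]; exact htmem
  · rintro ⟨s, hs, hrs⟩
    obtain ⟨hs1, hs2⟩ := (mem_southRanks_iff m n hm hn hco D hD s).mp hs
    exact ⟨⟨s + m, hs2, by omega⟩, ⟨s, hs1, by omega⟩⟩
end

section
/- Let n ≥ 1 and let λ be a partition whose first-column hook-length set H_λ is n-flush, with largest element h_1. Then the first-column hook-length set of the conjugate λ^T is also n-flush, and S^n(H_{λ^T}) = h_1 + n - S^n(H_λ) as sets, where S^n(H) = {s_0,...,s_{n-1}} with s_i the maximum of ((n+H) ∪ {i}) ∩ (i + nℤ). -/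
open Nat

/-! ### Auxiliary lemmas -/

section Aux

lemma lt_add_of_modeq {n a b : ℕ} (h : a % n = b % n) (hab : a < b) : a + n ≤ b := by
  have hd : n ∣ b - a := (Nat.modEq_iff_dvd' hab.le).mp h
  obtain ⟨k, hk⟩ := hd
  rcases Nat.eq_zero_or_pos k with rfl | hk0
  · omega
  · have : n * 1 ≤ n * k := Nat.mul_le_mul_left n hk0
    omega

lemma flush_descend {n : ℕ} (hn : 0 < n) {H : Finset ℕ} (hH : IsFlush n H) :
    ∀ h, h ∈ H → ∀ x, x % n = h % n → x ≤ h → x ∈ H := by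
  intro h
  induction h using Nat.strong_induction_on with
  | _ h ih =>
    intro hh x hmod hle
    rcases eq_or_lt_of_le hle with rfl | hlt
    · exact hh
    · have hxn : x + n ≤ h := lt_add_of_modeq hmod hlt
      have hnh : ¬ n ∣ h := hH.1 h hh
      have hgt : n < h := by
        rcases lt_or_eq_of_le (show n ≤ h by omega) with h' | h'
        · exact h'
        · exact absurd (h' ▸ dvd_refl n) hnh
      have hmem : h - n ∈ H := hH.2 h hh hgt
      refine ih (h - n) (by omega) hmem x ?_ (by omega)
      have heq : h - n + n = h := by omega
      calc x % n = h % n := hmod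
        _ = (h - n + n) % n := by rw [heq]
        _ = (h - n) % n := Nat.add_mod_right _ _

lemma sFun_mod {n : ℕ} (H : Finset ℕ) (i : ℕ) : sFun n H i % n = i % n := by
  have hmem := Finset.max'_mem (insert i ((H.filter (fun h => h % n = i % n)).image (fun h => h + n)))
    (Finset.insert_nonempty _ _)
  rw [Finset.mem_insert] at hmem
  rcases hmem with h | h
  · rw [sFun, h]
  · rw [Finset.mem_image] at h
    obtain ⟨a, ha, hae⟩ := h
    rw [Finset.mem_filter] at ha
    rw [sFun, ← hae, Nat.add_mod_right]
    exact ha.2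

lemma mem_iff_lt_sFun {n : ℕ} (hn : 0 < n) {H : Finset ℕ} (hH : IsFlush n H) (x : ℕ) :
    x ∈ H ↔ x < sFun n H (x % n) := by
  constructor
  · intro hx
    have hmm : x % n % n = x % n := Nat.mod_mod_of_dvd _ dvd_rfl
    have h0 : x + n ∈ insert (x % n) ((H.filter (fun h => h % n = x % n % n)).image (fun h => h + n)) := by
      refine Finset.mem_insert_of_mem (Finset.mem_image.mpr ⟨x, ?_, rfl⟩)
      exact Finset.mem_filter.mpr ⟨hx, by rw [hmm]⟩
    have h2 : x + n ≤ sFun n H (x % n) := by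
      simp only [sFun]
      exact Finset.le_max' _ _ h0
    omega
  · intro hx
    have hmem := Finset.max'_mem
      (insert (x % n) ((H.filter (fun h => h % n = x % n % n)).image (fun h => h + n)))
      (Finset.insert_nonempty _ _)
    rw [Finset.mem_insert] at hmem
    simp only [sFun] at hx
    rcases hmem with h | h
    · rw [h] at hx
      exact absurd hx (by have := Nat.mod_le x n; omega)
    · rw [Finset.mem_image] at h
      obtain ⟨a, ha, hae⟩ := h
      rw [Finset.mem_filter] at ha
      rw [← hae] at hx
      have hmod : x % n = a % n := by
        rw [ha.2, Nat.mod_mod_of_dvd _ dvd_rfl]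
      have hle : x ≤ a := by
        by_contra hgt
        have := lt_add_of_modeq hmod.symm (by omega)
        omega
      exact flush_descend hn hH a ha.1 x hmod hle

lemma sFun_eq_of_char {n : ℕ} (hn : 0 < n) {H : Finset ℕ} (hH : IsFlush n H) {i t : ℕ}
    (hi : i < n) (ht : t % n = i) (hchar : ∀ x, x % n = i → (x ∈ H ↔ x < t)) :
    sFun n H i = t := by
  have hs : sFun n H i % n = i := by rw [sFun_mod, Nat.mod_eq_of_lt hi]
  rcases lt_trichotomy (sFun n H i) t with h | h | h
  · have hmem : sFun n H i ∈ H := (hchar _ hs).mpr h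
    have := (mem_iff_lt_sFun hn hH (sFun n H i)).mp hmem
    rw [hs] at this; omega
  · exact h
  · have hnot : t ∉ H := fun hmem => by
      have := (hchar t ht).mp hmem; omega
    have := (mem_iff_lt_sFun hn hH t).not.mp hnot
    rw [ht] at this; omega

lemma sFun_le {n : ℕ} {H : Finset ℕ} {h1 : ℕ} (hh1 : ∀ h ∈ H, h ≤ h1) {i : ℕ} (hi : i < n) :
    sFun n H i ≤ h1 + n := by
  rw [sFun]
  apply Finset.max'_le
  intro y hy
  rw [Finset.mem_insert] at hy
  rcases hy with rfl | hy
  · omega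
  · rw [Finset.mem_image] at hy
    obtain ⟨a, ha, rfl⟩ := hy
    have := hh1 a (Finset.mem_filter.mp ha).1
    omega

/-- Main abstract lemma: complement of a flush set is flush with reflected `sSet`. -/
lemma flush_complement {n : ℕ} (hn : 0 < n) {H H' : Finset ℕ} (hH : IsFlush n H) {h1 : ℕ}
    (hh1 : h1 ∈ H) (hmax : ∀ h ∈ H, h ≤ h1)
    (hchar : ∀ y, y ∈ H' ↔ y ≤ h1 ∧ h1 - y ∉ H) :
    IsFlush n H' ∧ sSet n H' = (sSet n H).image (fun s => h1 + n - s) := by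
  have hflush' : IsFlush n H' := by
    constructor
    · intro y hy hdvd
      rw [hchar] at hy
      apply hy.2
      refine flush_descend hn hH h1 hh1 (h1 - y) ?_ (by omega)
      obtain ⟨k, hk⟩ := hdvd
      have h2 : h1 - y + n * k = h1 := by omega
      calc (h1 - y) % n = (h1 - y + n * k) % n := (Nat.add_mul_mod_self_left _ _ _).symm
        _ = h1 % n := by rw [h2]
    · intro y hy hny
      rw [hchar] at hy ⊢
      refine ⟨by omega, fun hmem => ?_⟩
      have heq : h1 - (y - n) = (h1 - y) + n := by omega
      rw [heq] at hmem
      rcases Nat.lt_or_ge n ((h1 - y) + n) with h' | h'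
      · exact hy.2 (by simpa using hH.2 _ hmem h')
      · have h0 : h1 - y = 0 := by omega
        rw [h0] at hmem
        exact hH.1 n (by simpa using hmem) dvd_rfl
  refine ⟨hflush', ?_⟩
  have key : ∀ i < n, ∀ j < n, (i + j) % n = h1 % n →
      sFun n H' i = h1 + n - sFun n H j := by
    intro i hi j hj hij
    set s := sFun n H j with hs_def
    have hsj : s % n = j := by rw [hs_def, sFun_mod, Nat.mod_eq_of_lt hj]
    have hsj' : s ≡ j [MOD n] := by
      unfold Nat.ModEq; rw [hsj, Nat.mod_eq_of_lt hj]
    have hsle : s ≤ h1 + n := sFun_le hmax hj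
    set t := h1 + n - s with ht_def
    have hts : t + s = h1 + n := by omega
    have hti : t % n = i := by
      have h3' : (i + s) % n = (t + s) % n := by
        calc (i + s) % n = (i + j) % n := Nat.ModEq.add_left i hsj'
          _ = h1 % n := hij
          _ = (h1 + n) % n := (Nat.add_mod_right _ _).symm
          _ = (t + s) % n := by rw [hts]
      have h4' : i % n = t % n := Nat.ModEq.add_right_cancel' s h3'
      rw [← h4', Nat.mod_eq_of_lt hi]
    refine sFun_eq_of_char hn hflush' hi hti ?_
    intro x hx
    have hx' : x ≡ i [MOD n] := by
      unfold Nat.ModEq; rw [hx, Nat.mod_eq_of_lt hi]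
    have hxs : (x + s) % n = h1 % n := by
      calc (x + s) % n = (i + j) % n := Nat.ModEq.add hx' hsj'
        _ = h1 % n := hij
    have hres : x ≤ h1 → (h1 - x) % n = j := by
      intro hxh1
      have h5 : (h1 - x) + x ≡ j + x [MOD n] := by
        rw [Nat.sub_add_cancel hxh1]
        calc h1 % n = (i + j) % n := hij.symm
          _ = (j + i) % n := by rw [Nat.add_comm]
          _ = (j + x) % n := (Nat.ModEq.add_left j hx').symm
      have h6 := Nat.ModEq.add_right_cancel' x h5
      rw [Nat.ModEq] at h6
      rw [h6, Nat.mod_eq_of_lt hj]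
    rw [hchar]
    constructor
    · rintro ⟨hxh1, hnm⟩
      have h7 := (mem_iff_lt_sFun hn hH (h1 - x)).not.mp hnm
      rw [hres hxh1, ← hs_def] at h7
      have hsle2 : s ≤ h1 - x := by omega
      omega
    · intro hxt
      have hxsle : x + s < h1 + n := by omega
      have hxh1 : x + s ≤ h1 := by
        by_contra hgt
        have := lt_add_of_modeq hxs.symm (show h1 < x + s by omega)
        omega
      refine ⟨by omega, fun hmem => ?_⟩
      have h7 := (mem_iff_lt_sFun hn hH (h1 - x)).mp hmem
      rw [hres (by omega), ← hs_def] at h7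
      omega
  -- now prove the image equality
  ext t
  simp only [sSet, Finset.mem_image, Finset.mem_range]
  constructor
  · rintro ⟨i, hi, rfl⟩
    refine ⟨sFun n H ((h1 + n - i) % n), ⟨(h1 + n - i) % n, Nat.mod_lt _ hn, rfl⟩, ?_⟩
    refine (key i hi ((h1 + n - i) % n) (Nat.mod_lt _ hn) ?_).symm
    have heq : i + (h1 + n - i) = h1 + n := by omega
    calc (i + (h1 + n - i) % n) % n
        = (i + (h1 + n - i)) % n := Nat.ModEq.add_left i (Nat.mod_modEq _ n)
      _ = (h1 + n) % n := by rw [heq]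
      _ = h1 % n := Nat.add_mod_right _ _
  · rintro ⟨s, ⟨j, hj, rfl⟩, rfl⟩
    refine ⟨(h1 + n - j) % n, Nat.mod_lt _ hn, ?_⟩
    refine key _ (Nat.mod_lt _ hn) j hj ?_
    have heq : h1 + n - j + j = h1 + n := by omega
    calc ((h1 + n - j) % n + j) % n
        = (h1 + n - j + j) % n := Nat.ModEq.add_right j (Nat.mod_modEq _ n)
      _ = (h1 + n) % n := by rw [heq]
      _ = h1 % n := Nat.add_mod_right _ _

/-! ### Partition / hook lemmas -/

lemma getD_le_getD {L : List ℕ} (hs : L.Pairwise (· ≥ ·)) {i j : ℕ} (hij : i ≤ j)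
    (hj : j < L.length) : L.getD j 0 ≤ L.getD i 0 := by
  rcases eq_or_lt_of_le hij with rfl | h
  · exact le_refl _
  · have := List.Pairwise.rel_get_of_lt hs (a := ⟨i, lt_trans h hj⟩) (b := ⟨j, hj⟩) h
    rw [List.getD_eq_getElem L 0 hj, List.getD_eq_getElem L 0 (lt_trans h hj)]
    exact this

lemma hook_col0 {L : List ℕ} (hL : IsPartition L) {i : ℕ} (hi : i < L.length) :
    hook L i 0 = L.getD i 0 + (L.length - 1 - i) := by
  rw [hook]
  have hc : (L.drop (i+1)).countP (fun x => decide (0 < x)) = L.length - (i+1) := by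
    rw [List.countP_eq_length.mpr, List.length_drop]
    intro a ha
    simpa using hL.2 a (List.mem_of_mem_drop ha)
  omega

lemma mem_firstColHooks {L : List ℕ} {x : ℕ} :
    x ∈ firstColHooks L ↔ ∃ i < L.length, hook L i 0 = x := by
  simp [firstColHooks]

lemma hook_strict {L : List ℕ} (hL : IsPartition L) {a b : ℕ} (h : a < b)
    (hb : b < L.length) : hook L b 0 < hook L a 0 := by
  rw [hook_col0 hL hb, hook_col0 hL (lt_trans h hb)]
  have := getD_le_getD hL.1 h.le hb
  omega

lemma firstColHooks_card {L : List ℕ} (hL : IsPartition L) :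
    (firstColHooks L).card = L.length := by
  rw [firstColHooks, Finset.card_image_of_injOn, Finset.card_range]
  intro a ha b hb hab
  simp only [Finset.coe_range, Set.mem_Iio] at ha hb
  have hab' : hook L a 0 = hook L b 0 := hab
  rcases Nat.lt_trichotomy a b with h | h | h
  · exact absurd hab' (Nat.ne_of_gt (hook_strict hL h hb))
  · exact h
  · exact absurd hab' (Nat.ne_of_lt (hook_strict hL h ha))

lemma hook_le_h1 {L : List ℕ} (hL : IsPartition L) (hne : L ≠ []) {h1 : ℕ}
    (hh1 : IsGreatest (↑(firstColHooks L) : Set ℕ) h1) :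
    h1 = L.getD 0 0 + (L.length - 1) := by
  have hlen : 0 < L.length := List.length_pos_iff.mpr hne
  have hmem : hook L 0 0 ∈ firstColHooks L := mem_firstColHooks.mpr ⟨0, hlen, rfl⟩
  have h0 : hook L 0 0 ≤ h1 := hh1.2 hmem
  obtain ⟨i, hi, hie⟩ := mem_firstColHooks.mp hh1.1
  have h2 : hook L i 0 ≤ hook L 0 0 := by
    rcases Nat.eq_zero_or_pos i with rfl | hipos
    · exact le_refl _
    · exact (hook_strict hL hipos hi).le
  have h3 : h1 = hook L 0 0 := le_antisymm (hie ▸ h2) h0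
  rw [h3, hook_col0 hL hlen]
  omega

lemma count_ge {L : List ℕ} (hL : IsPartition L) {i j : ℕ} (hi : i < L.length)
    (h : j < L.getD i 0) : i + 1 ≤ L.countP (fun x => decide (j < x)) := by
  have hsplit : L.countP (fun x => decide (j < x)) =
      (L.take (i+1)).countP (fun x => decide (j < x)) +
      (L.drop (i+1)).countP (fun x => decide (j < x)) := by
    rw [← List.countP_append, List.take_append_drop]
  have htake : (L.take (i+1)).countP (fun x => decide (j < x)) = i + 1 := by
    rw [List.countP_eq_length.mpr, List.length_take]
    · omega
    · intro a ha
      obtain ⟨k, hk, hke⟩ := List.mem_iff_getElem.mp ha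
      have hk' : k < L.length := by
        rw [List.length_take] at hk; omega
      rw [List.getElem_take] at hke
      have hki : k ≤ i := by rw [List.length_take] at hk; omega
      have : L.getD i 0 ≤ L.getD k 0 := getD_le_getD hL.1 hki hi
      rw [List.getD_eq_getElem L 0 hk', hke] at this
      simp only [decide_eq_true_eq]
      omega
  omega

lemma count_le {L : List ℕ} (hL : IsPartition L) {i j : ℕ} (hi : i < L.length)
    (h : L.getD i 0 ≤ j) : L.countP (fun x => decide (j < x)) ≤ i := by
  have hsplit : L.countP (fun x => decide (j < x)) =
      (L.take i).countP (fun x => decide (j < x)) +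
      (L.drop i).countP (fun x => decide (j < x)) := by
    rw [← List.countP_append, List.take_append_drop]
  have hdrop : (L.drop i).countP (fun x => decide (j < x)) = 0 := by
    rw [List.countP_eq_zero]
    intro a ha
    obtain ⟨k, hk, hke⟩ := List.mem_iff_getElem.mp ha
    rw [List.getElem_drop] at hke
    have hk' : i + k < L.length := by rw [List.length_drop] at hk; omega
    have : L.getD (i + k) 0 ≤ L.getD i 0 := getD_le_getD hL.1 (Nat.le_add_right i k) hk'
    rw [List.getD_eq_getElem L 0 hk', hke] at this
    simp only [decide_eq_true_eq]
    omega
  have := List.countP_le_length (p := fun x => decide (j < x)) (l := L.take i)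
  rw [List.length_take] at this
  omega

lemma conjugate_length (L : List ℕ) : (conjugate L).length = L.getD 0 0 := by
  simp [conjugate]

lemma conjugate_getD (L : List ℕ) {j : ℕ} (hj : j < L.getD 0 0) :
    (conjugate L).getD j 0 = L.countP (fun x => decide (j < x)) := by
  rw [List.getD_eq_getElem _ 0 (by rw [conjugate_length]; exact hj)]
  simp [conjugate]

lemma head_mem {L : List ℕ} (hne : L ≠ []) : L.getD 0 0 ∈ L := by
  cases L with
  | nil => exact absurd rfl hne
  | cons a l => exact List.mem_cons_self (a := a) (l := l)

lemma conjugate_isPartition {L : List ℕ} (hL : IsPartition L) (hne : L ≠ []) :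
    IsPartition (conjugate L) := by
  have hget : ∀ (k : ℕ) (hk : k < (conjugate L).length),
      (conjugate L)[k] = L.countP (fun x => decide (k < x)) := by
    intro k hk
    have hk' : k < L.getD 0 0 := lt_of_lt_of_eq hk (conjugate_length L)
    rw [← List.getD_eq_getElem _ 0 hk, conjugate_getD L hk']
  constructor
  · rw [List.pairwise_iff_get]
    intro i j hij
    rw [List.get_eq_getElem, List.get_eq_getElem, hget i i.2, hget j j.2]
    apply List.countP_mono_left
    intro x _ hx
    simp only [decide_eq_true_eq] at hx ⊢
    have : (i : ℕ) < (j : ℕ) := hij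
    omega
  · intro x hx
    obtain ⟨k, hk, hke⟩ := List.mem_iff_getElem.mp hx
    rw [hget k hk] at hke
    rw [← hke, List.countP_pos_iff]
    refine ⟨L.getD 0 0, head_mem hne, ?_⟩
    have hk' : k < L.getD 0 0 := lt_of_lt_of_eq hk (conjugate_length L)
    simpa using hk'

/-- The complement characterization of the conjugate's first-column hooks. -/
lemma conj_char {L : List ℕ} (hL : IsPartition L) (hne : L ≠ []) {h1 : ℕ}
    (hh1 : IsGreatest (↑(firstColHooks L) : Set ℕ) h1) :
    ∀ y, y ∈ firstColHooks (conjugate L) ↔ y ≤ h1 ∧ h1 - y ∉ firstColHooks L := by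
  have hlen : 0 < L.length := List.length_pos_iff.mpr hne
  set a := L.length with ha_def
  set m := L.getD 0 0 with hm_def
  have hm : 0 < m := hL.2 _ (head_mem hne)
  have hh1v : h1 = m + (a - 1) := hook_le_h1 hL hne hh1
  have hconjP := conjugate_isPartition hL hne
  have hconjlen : (conjugate L).length = m := conjugate_length L
  -- hooks of conjugate
  have hookG : ∀ j < m, hook (conjugate L) j 0 = L.countP (fun x => decide (j < x)) + (m - 1 - j) := by
    intro j hj
    rw [hook_col0 hconjP (by omega), hconjlen, conjugate_getD L hj]
  have hGle : ∀ y ∈ firstColHooks (conjugate L), y ≤ h1 := by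
    intro y hy
    obtain ⟨j, hj, hje⟩ := mem_firstColHooks.mp hy
    rw [hconjlen] at hj
    rw [hookG j hj] at hje
    have := List.countP_le_length (p := fun x => decide (j < x)) (l := L)
    omega
  -- disjointness
  have hdisj : Disjoint (firstColHooks L)
      ((firstColHooks (conjugate L)).image (fun g => h1 - g)) := by
    rw [Finset.disjoint_left]
    intro x hxF hxG
    obtain ⟨i, hi, hie⟩ := mem_firstColHooks.mp hxF
    obtain ⟨g, hg, hge⟩ := Finset.mem_image.mp hxG
    obtain ⟨j, hj, hje⟩ := mem_firstColHooks.mp hg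
    rw [hconjlen] at hj
    rw [hookG j hj] at hje
    rw [hook_col0 hL hi] at hie
    have hTle : L.countP (fun x => decide (j < x)) ≤ a := List.countP_le_length
    rcases Nat.lt_or_ge j (L.getD i 0) with hcase | hcase
    · have := count_ge hL hi hcase
      omega
    · have := count_le hL hi hcase
      omega
  -- cardinalities
  have hcardF : (firstColHooks L).card = a := firstColHooks_card hL
  have hGinj : Set.InjOn (fun g => h1 - g) ↑(firstColHooks (conjugate L)) := by
    intro x hx y hy hxy
    have hx' := hGle x (by exact_mod_cast hx)
    have hy' := hGle y (by exact_mod_cast hy)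
    simp only at hxy
    omega
  have hcardG : ((firstColHooks (conjugate L)).image (fun g => h1 - g)).card = m := by
    rw [Finset.card_image_of_injOn hGinj, firstColHooks_card hconjP, hconjlen]
  -- union is range (h1+1)
  have hsub : firstColHooks L ∪ (firstColHooks (conjugate L)).image (fun g => h1 - g)
      ⊆ Finset.range (h1 + 1) := by
    intro x hx
    rw [Finset.mem_union] at hx
    rw [Finset.mem_range]
    rcases hx with hx | hx
    · have := hh1.2 (by exact_mod_cast hx : x ∈ (↑(firstColHooks L) : Set ℕ))
      omega
    · obtain ⟨g, _, rfl⟩ := Finset.mem_image.mp hx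
      omega
  have huniv : firstColHooks L ∪ (firstColHooks (conjugate L)).image (fun g => h1 - g)
      = Finset.range (h1 + 1) := by
    apply Finset.eq_of_subset_of_card_le hsub
    rw [Finset.card_range, Finset.card_union_of_disjoint hdisj, hcardF, hcardG]
    omega
  intro y
  constructor
  · intro hy
    refine ⟨hGle y hy, ?_⟩
    intro hmem
    have : h1 - y ∈ (firstColHooks (conjugate L)).image (fun g => h1 - g) :=
      Finset.mem_image.mpr ⟨y, hy, rfl⟩
    exact Finset.disjoint_left.mp hdisj hmem this
  · rintro ⟨hyh1, hnm⟩
    have : h1 - y ∈ Finset.range (h1 + 1) := Finset.mem_range.mpr (by omega)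
    rw [← huniv, Finset.mem_union] at this
    rcases this with h | h
    · exact absurd h hnm
    · obtain ⟨g, hg, hge⟩ := Finset.mem_image.mp h
      have hg' := hGle g hg
      have : y = g := by omega
      rwa [this]

end Aux

/-- If the first-column hook-length set `H_λ` of a partition `λ`
is `n`-flush with largest element `h₁`, then the first-column hook-length set of
the conjugate `λᵀ` is `n`-flush and `S^n(H_{λᵀ}) = h₁ + n - S^n(H_λ)`. -/
theorem flush_conjugate (n : ℕ) (hn : 0 < n) (L : List ℕ) (hL : IsPartition L)
    (hne : L ≠ []) (hflush : IsFlush n (firstColHooks L)) (h1 : ℕ)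
    (hh1 : IsGreatest (↑(firstColHooks L) : Set ℕ) h1) :
    IsFlush n (firstColHooks (conjugate L)) ∧
      sSet n (firstColHooks (conjugate L)) =
        (sSet n (firstColHooks L)).image (fun s => h1 + n - s) := by
  exact flush_complement hn hflush hh1.1 (fun h hh => hh1.2 hh)
    (conj_char hL hne hh1)
end
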